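/- arXiv:2206.00824 — 2 statements merged into one kernel-verified Lean document; each statement's English description precedes it below -/
import Mathlib

section
/- Let d ≥ 1 and let (p,q,r) ∈ [1,∞]³ be a Hölder triple, i.e. 1/p + 1/q = 1/r. Let p′ and q′ denote the Hölder conjugates of p and q. If the tensor Θ: ℤ^d × ℤ^d × ℤ^d → ℂ has finite mixed norm ‖Θ‖_{ℓ^r_j ℓ^{p′}_k ℓ^{q′}_ℓ} := ( Σ_{j∈ℤ^d} ( Σ_{k∈ℤ^d} ( Σ_{ℓ∈ℤ^d} |Θ(j,k,ℓ)|^{q′} )^{p′/q′} )^{r/p′} )^{1/r} < ∞ (with the usual modifications when an exponent is ∞), then the discrete bilinear operator 𝒯_Θ is bounded from ℓ^p(ℤ^d) × ℓ^q(ℤ^d) to ℓ^r(ℤ^d); more precisely, ‖𝒯_Θ(f,g)‖_{ℓ^r} ≤ ‖Θ‖_{ℓ^r_j ℓ^{p′}_k ℓ^{q′}_ℓ} ‖f‖_{ℓ^p} ‖g‖_{ℓ^q} for all f ∈ ℓ^p(ℤ^d) and g ∈ ℓ^q(ℤ^d). -/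
open scoped ENNReal NNReal BigOperators

noncomputable section

/-- The integer lattice `ℤ^d`. -/
abbrev Zd (d : ℕ) := Fin d → ℤ

/-- Euclidean norm `|j|` of an integer vector `j ∈ ℤ^d`. -/
def znorm {d : ℕ} (j : Zd d) : ℝ := Real.sqrt (∑ i, ((j i : ℝ)) ^ 2)

/-- Euclidean norm of a real vector. -/
def rnorm {d : ℕ} (x : Fin d → ℝ) : ℝ := Real.sqrt (∑ i, (x i) ^ 2)

/-- Japanese bracket `⟨x⟩ = (1 + x²)^{1/2}`. -/
def jb (x : ℝ) : ℝ := Real.sqrt (1 + x ^ 2)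

/-- The discrete bilinear operator `𝒯_Θ` (named `Tbil` here) associated with an infinite tensor `Θ`:
`(𝒯_Θ(f,g))_j = Σ_k Σ_ℓ Θ(j,k,ℓ) f_k g_ℓ`. -/
def Tbil {d : ℕ} (Θ : Zd d → Zd d → Zd d → ℂ) (f g : Zd d → ℂ) : Zd d → ℂ :=
  fun j => ∑' k, ∑' l, Θ j k l * f k * g l

/-- `ℓ^p`-type norm (extended-real valued) of a family of nonnegative extended reals,
with the usual modification (supremum) when `p = ∞`. -/
def nestNorm {ι : Type*} (p : ℝ≥0∞) (F : ι → ℝ≥0∞) : ℝ≥0∞ :=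
  if p = ∞ then ⨆ i, F i else (∑' i, F i ^ p.toReal) ^ (1 / p.toReal)

/-- The weighted `ℓ^p_s(ℤ^d)` norm `(Σ_k ⟨k⟩^{sp} |f_k|^p)^{1/p}`. -/
def wlpNorm {d : ℕ} (p : ℝ≥0∞) (s : ℝ) (f : Zd d → ℂ) : ℝ≥0∞ :=
  nestNorm p fun k => ENNReal.ofReal (jb (znorm k) ^ s * ‖f k‖)

/-- The `ℓ^p(ℤ^d)` norm. -/
def lpNorm {d : ℕ} (p : ℝ≥0∞) (f : Zd d → ℂ) : ℝ≥0∞ :=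
  nestNorm p fun k => ENNReal.ofReal ‖f k‖

/-- The tensor norm `‖Θ‖_{ω,N} = sup_{j,k,ℓ} |Θ(j,k,ℓ)| ⟨|j−k|+|j−ℓ|⟩^{2N} /
(⟨|j|+|k|⟩^ω ⟨|j|+|ℓ|⟩^ω)`. -/
def tensorNorm {d : ℕ} (ω N : ℝ) (Θ : Zd d → Zd d → Zd d → ℂ) : ℝ≥0∞ :=
  ⨆ j, ⨆ k, ⨆ l, ENNReal.ofReal
    (‖Θ j k l‖ * jb (znorm (j - k) + znorm (j - l)) ^ (2 * N) /
      (jb (znorm j + znorm k) ^ ω * jb (znorm j + znorm l) ^ ω))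

/-- The tensor norm `‖Θ‖_{ω₁,ω₂,N}`. -/
def tensorNorm2 {d : ℕ} (ω₁ ω₂ N : ℝ) (Θ : Zd d → Zd d → Zd d → ℂ) : ℝ≥0∞ :=
  ⨆ j, ⨆ k, ⨆ l, ENNReal.ofReal
    (‖Θ j k l‖ * jb (znorm (j - k) + znorm (j - l)) ^ (2 * N) /
      (jb (znorm j + znorm k) ^ ω₁ * jb (znorm j + znorm l) ^ ω₂))

/-- The tensor norm `‖Θ‖_{0,0,ω,N} = sup_{j,k,ℓ} |Θ(j,k,ℓ)| ⟨|j−k|+|j−ℓ|⟩^{2N} /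
⟨|j|+|k|+|ℓ|⟩^ω`. -/
def tensorNorm00 {d : ℕ} (ω N : ℝ) (Θ : Zd d → Zd d → Zd d → ℂ) : ℝ≥0∞ :=
  ⨆ j, ⨆ k, ⨆ l, ENNReal.ofReal
    (‖Θ j k l‖ * jb (znorm (j - k) + znorm (j - l)) ^ (2 * N) /
      jb (znorm j + znorm k + znorm l) ^ ω)

/-- The first bilinear commutator `[𝒯_Θ, b]₁(f,g) = 𝒯_Θ(bf, g) − b·𝒯_Θ(f,g)`. -/
def comm1 {d : ℕ} (Θ : Zd d → Zd d → Zd d → ℂ) (b f g : Zd d → ℂ) : Zd d → ℂ :=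
  fun j => Tbil Θ (fun k => b k * f k) g j - b j * Tbil Θ f g j

/-- The second bilinear commutator `[𝒯_Θ, b]₂(f,g) = 𝒯_Θ(f, bg) − b·𝒯_Θ(f,g)`. -/
def comm2 {d : ℕ} (Θ : Zd d → Zd d → Zd d → ℂ) (b f g : Zd d → ℂ) : Zd d → ℂ :=
  fun j => Tbil Θ f (fun l => b l * g l) j - b j * Tbil Θ f g j

/-- One-step finite difference in the variables `(j,k)`, with shift `v ∈ ℤ^d`:
`(D2 v Θ)(j,k,ℓ) = Θ(j+v, k+v, ℓ) − Θ(j,k,ℓ)`. -/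
def D2 {d : ℕ} (v : Zd d) (Θ : Zd d → Zd d → Zd d → ℂ) : Zd d → Zd d → Zd d → ℂ :=
  fun j k l => Θ (j + v) (k + v) l - Θ j k l

/-- One-step finite difference in the variables `(j,ℓ)`, with shift `v ∈ ℤ^d`:
`(D3 v Θ)(j,k,ℓ) = Θ(j+v, k, ℓ+v) − Θ(j,k,ℓ)`. -/
def D3 {d : ℕ} (v : Zd d) (Θ : Zd d → Zd d → Zd d → ℂ) : Zd d → Zd d → Zd d → ℂ :=
  fun j k l => Θ (j + v) k (l + v) - Θ j k l

/-- The iterated partial finite difference operator `Δ₂^α` for `α ∈ ℤ^d`: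
in direction `m`, `Δ_{2,m}^t = (Δ₂^{m, sign t})^{|t|}`. -/
def Delta2 {d : ℕ} (α : Zd d) (Θ : Zd d → Zd d → Zd d → ℂ) : Zd d → Zd d → Zd d → ℂ :=
  (List.finRange d).foldr
    (fun m F => (D2 (Pi.single m (Int.sign (α m))))^[(α m).natAbs] ∘ F) id Θ

/-- The iterated partial finite difference operator `Δ₃^β` for `β ∈ ℤ^d`. -/
def Delta3 {d : ℕ} (β : Zd d) (Θ : Zd d → Zd d → Zd d → ℂ) : Zd d → Zd d → Zd d → ℂ :=
  (List.finRange d).foldr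
    (fun m F => (D3 (Pi.single m (Int.sign (β m))))^[(β m).natAbs] ∘ F) id Θ

/-- `|α| = Σ_m |α_m|` for `α ∈ ℤ^d`. -/
def l1norm {d : ℕ} (α : Zd d) : ℝ := ∑ m, |(α m : ℝ)|

/-- The bilinear tensor class `BT^{ω,N}(ℤ^d)`:
`|Δ₂^α Δ₃^β Θ(j,k,ℓ)| ≤ C_{N,α,β} ⟨|j|+|k|+|ℓ|⟩^{ω−|α|−|β|} ⟨|j−k|+|j−ℓ|⟩^{−2N}`. -/
def BT {d : ℕ} (ω : ℝ) (N : ℕ) (Θ : Zd d → Zd d → Zd d → ℂ) : Prop :=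
  ∀ α β : Zd d, ∃ C : ℝ, 0 < C ∧ ∀ j k l : Zd d,
    ‖Delta2 α (Delta3 β Θ) j k l‖ ≤
      C * jb (znorm j + znorm k + znorm l) ^ (ω - l1norm α - l1norm β) *
        jb (znorm (j - k) + znorm (j - l)) ^ (-(2 * (N : ℝ)))

/-- The bilinear tensor class of order zero, `BT^0(ℤ^d) = ∪_{N > d} BT^{0,N}(ℤ^d)`. -/
def BT0 {d : ℕ} (Θ : Zd d → Zd d → Zd d → ℂ) : Prop :=
  ∃ N : ℕ, d < N ∧ BT 0 N Θ

/-- Directional derivative of a function on `ℝ^d × ℝ^d` in the direction `v`. -/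
def pDeriv {d : ℕ} (v : (Fin d → ℝ) × (Fin d → ℝ))
    (F : (Fin d → ℝ) × (Fin d → ℝ) → ℂ) : (Fin d → ℝ) × (Fin d → ℝ) → ℂ :=
  fun p => fderiv ℝ F p v

/-- Iterated partial derivative `∂_x^α` in the first group of variables. -/
def pdx {d : ℕ} (α : Fin d → ℕ) :
    ((Fin d → ℝ) × (Fin d → ℝ) → ℂ) → (Fin d → ℝ) × (Fin d → ℝ) → ℂ :=
  (List.finRange d).foldr (fun m G => (pDeriv (Pi.single m 1, 0))^[α m] ∘ G) id

/-- Iterated partial derivative `∂_y^β` in the second group of variables. -/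
def pdy {d : ℕ} (β : Fin d → ℕ) :
    ((Fin d → ℝ) × (Fin d → ℝ) → ℂ) → (Fin d → ℝ) × (Fin d → ℝ) → ℂ :=
  (List.finRange d).foldr (fun m G => (pDeriv (0, Pi.single m 1))^[β m] ∘ G) id

section Aux

variable {ι : Type*}

lemma holder_tsum (f g : ι → ℝ≥0∞) {p q : ℝ} (hpq : p.HolderConjugate q) :
    ∑' i, f i * g i ≤ (∑' i, f i ^ p) ^ (1/p) * (∑' i, g i ^ q) ^ (1/q) := by
  rw [ENNReal.tsum_eq_iSup_sum]
  refine iSup_le fun s => le_trans (ENNReal.inner_le_Lp_mul_Lq s f g hpq) ?_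
  have h1 : (0:ℝ) ≤ 1 / p := hpq.one_div_pos.le
  have h2 : (0:ℝ) ≤ 1 / q := hpq.symm.one_div_pos.le
  gcongr <;> first | assumption | exact ENNReal.sum_le_tsum s

lemma nestNorm_one (b : ι → ℝ≥0∞) : nestNorm 1 b = ∑' i, b i := by
  simp [nestNorm]

lemma nestNorm_holder {p p' : ℝ≥0∞} (hc : p⁻¹ + p'⁻¹ = 1) (a b : ι → ℝ≥0∞) :
    ∑' i, a i * b i ≤ nestNorm p a * nestNorm p' b := by
  have h : ENNReal.HolderConjugate p p' := ENNReal.holderConjugate_iff.mpr hc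
  rcases eq_or_ne p ∞ with hp | hp
  · subst hp
    have hp' : p' = 1 := by
      have := hc; simp only [ENNReal.inv_top, zero_add] at this
      simpa [ENNReal.inv_eq_one] using this
    subst hp'
    rw [nestNorm_one]
    simp only [nestNorm, if_pos rfl]
    calc ∑' i, a i * b i ≤ ∑' i, (⨆ j, a j) * b i :=
          ENNReal.tsum_le_tsum fun i => mul_le_mul_left (le_iSup a i) _
      _ = (⨆ j, a j) * ∑' i, b i := ENNReal.tsum_mul_left
  rcases eq_or_ne p' ∞ with hp' | hp'
  · subst hp'
    have hp1 : p = 1 := by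
      have := hc; simp only [ENNReal.inv_top, add_zero] at this
      simpa [ENNReal.inv_eq_one] using this
    subst hp1
    rw [nestNorm_one]
    simp only [nestNorm, if_pos rfl]
    calc ∑' i, a i * b i ≤ ∑' i, a i * ⨆ j, b j :=
          ENNReal.tsum_le_tsum fun i => mul_le_mul_right (le_iSup b i) _
      _ = (∑' i, a i) * ⨆ j, b j := ENNReal.tsum_mul_right
  · have hp0 : p ≠ 0 := @ENNReal.HolderConjugate.ne_zero p p' h
    have hp'0 : p' ≠ 0 := @ENNReal.HolderConjugate.ne_zero p' p
        (ENNReal.holderConjugate_iff.mpr (by rw [add_comm]; exact hc))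
    have hp1 : 1 < p := by
      rw [← ENNReal.inv_lt_one]
      calc p⁻¹ < p⁻¹ + p'⁻¹ :=
            ENNReal.lt_add_right (by simpa using hp0) (by simpa using hp')
        _ = 1 := hc
    have hconj : (p.toReal).HolderConjugate p'.toReal := by
      rw [Real.holderConjugate_iff]
      constructor
      · rw [← ENNReal.toReal_one]
        exact ENNReal.toReal_strict_mono hp hp1
      · rw [← ENNReal.toReal_inv, ← ENNReal.toReal_inv,
          ← ENNReal.toReal_add (by simpa using hp0) (by simpa using hp'0), hc,
          ENNReal.toReal_one]
    simp only [nestNorm, if_neg hp, if_neg hp']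
    exact holder_tsum a b hconj

lemma nestNorm_mono {p : ℝ≥0∞} {F G : ι → ℝ≥0∞} (h : ∀ i, F i ≤ G i) :
    nestNorm p F ≤ nestNorm p G := by
  unfold nestNorm
  split
  · exact iSup_mono h
  · refine ENNReal.rpow_le_rpow ?_ (by positivity)
    exact ENNReal.tsum_le_tsum fun i => ENNReal.rpow_le_rpow (h i) ENNReal.toReal_nonneg

lemma nestNorm_mul_const {p : ℝ≥0∞} (hp : 1 ≤ p) (F : ι → ℝ≥0∞) (c : ℝ≥0∞) :
    nestNorm p (fun i => F i * c) = nestNorm p F * c := by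
  unfold nestNorm
  split
  · exact (ENNReal.iSup_mul _ _).symm
  · rename_i h
    have ht : 0 < p.toReal := ENNReal.toReal_pos (one_pos.trans_le hp).ne' h
    simp_rw [ENNReal.mul_rpow_of_nonneg _ _ ht.le, ENNReal.tsum_mul_right,
      ENNReal.mul_rpow_of_nonneg _ _ (by positivity : (0:ℝ) ≤ 1/p.toReal),
      ← ENNReal.rpow_mul, mul_one_div, div_self ht.ne', ENNReal.rpow_one]

lemma enorm_tsum_le (f : ι → ℂ) :
    (‖∑' i, f i‖₊ : ℝ≥0∞) ≤ ∑' i, (‖f i‖₊ : ℝ≥0∞) := by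
  by_cases h : ∑' i, (‖f i‖₊ : ℝ≥0∞) = ∞
  · simp [h]
  · have hs : Summable fun i => ‖f i‖₊ := ENNReal.tsum_coe_ne_top_iff_summable.mp h
    calc (‖∑' i, f i‖₊ : ℝ≥0∞) ≤ ((∑' i, ‖f i‖₊ : ℝ≥0) : ℝ≥0∞) := by
          exact_mod_cast nnnorm_tsum_le hs
      _ = ∑' i, (‖f i‖₊ : ℝ≥0∞) := ENNReal.coe_tsum hs

end Aux

/-- for a Hölder triple `(p,q,r)` and conjugates `p′, q′`, if the mixed norm
`‖Θ‖_{ℓ^r_j ℓ^{p′}_k ℓ^{q′}_ℓ}` is finite then `𝒯_Θ : ℓ^p × ℓ^q → ℓ^r` is bounded, with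
`‖𝒯_Θ(f,g)‖_{ℓ^r} ≤ ‖Θ‖_{ℓ^r_j ℓ^{p′}_k ℓ^{q′}_ℓ} ‖f‖_{ℓ^p} ‖g‖_{ℓ^q}`. -/

theorem stmt_1 {d : ℕ} (hd : 1 ≤ d) (p q r p' q' : ℝ≥0∞)
    (hp : 1 ≤ p) (hq : 1 ≤ q) (hr : 1 ≤ r)
    (hpqr : p⁻¹ + q⁻¹ = r⁻¹)
    (hp' : p⁻¹ + p'⁻¹ = 1) (hq' : q⁻¹ + q'⁻¹ = 1)
    (Θ : Zd d → Zd d → Zd d → ℂ)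
    (hΘ : nestNorm r (fun j : Zd d => nestNorm p' (fun k : Zd d =>
      nestNorm q' (fun l : Zd d => ENNReal.ofReal ‖Θ j k l‖))) ≠ ∞)
    (f g : Zd d → ℂ) (hf : lpNorm p f ≠ ∞) (hg : lpNorm q g ≠ ∞) :
    lpNorm r (Tbil Θ f g) ≤
      nestNorm r (fun j : Zd d => nestNorm p' (fun k : Zd d =>
        nestNorm q' (fun l : Zd d => ENNReal.ofReal ‖Θ j k l‖))) *
      lpNorm p f * lpNorm q g := by
  classical
  set A : Zd d → ℝ≥0∞ := fun j => nestNorm p' (fun k : Zd d =>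
    nestNorm q' (fun l : Zd d => ENNReal.ofReal ‖Θ j k l‖)) with hA
  have hq'' : q'⁻¹ + q⁻¹ = 1 := by rw [add_comm]; exact hq'
  have hp'' : p'⁻¹ + p⁻¹ = 1 := by rw [add_comm]; exact hp'
  have hgq : lpNorm q g = nestNorm q (fun l => (‖g l‖₊ : ℝ≥0∞)) := by
    simp only [lpNorm, ofReal_norm, enorm_eq_nnnorm]
  have hfp : lpNorm p f = nestNorm p (fun k => (‖f k‖₊ : ℝ≥0∞)) := by
    simp only [lpNorm, ofReal_norm, enorm_eq_nnnorm]
  have hAeq : ∀ j, A j = nestNorm p' (fun k =>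
      nestNorm q' (fun l => (‖Θ j k l‖₊ : ℝ≥0∞))) := by
    intro j; simp only [hA, ofReal_norm, enorm_eq_nnnorm]
  have key : ∀ j, ENNReal.ofReal ‖Tbil Θ f g j‖ ≤ A j * (lpNorm p f * lpNorm q g) := by
    intro j
    calc ENNReal.ofReal ‖Tbil Θ f g j‖
        ≤ ∑' k, ∑' l, (‖Θ j k l‖₊ : ℝ≥0∞) * ‖f k‖₊ * ‖g l‖₊ := by
          rw [ofReal_norm, enorm_eq_nnnorm]
          refine (enorm_tsum_le _).trans (ENNReal.tsum_le_tsum fun k => ?_)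
          refine (enorm_tsum_le _).trans (ENNReal.tsum_le_tsum fun l => ?_)
          simp [nnnorm_mul]
      _ = ∑' k, (∑' l, (‖Θ j k l‖₊ : ℝ≥0∞) * ‖g l‖₊) * ‖f k‖₊ := by
          refine tsum_congr fun k => ?_
          rw [← ENNReal.tsum_mul_right]
          exact tsum_congr fun l => by ring
      _ ≤ ∑' k, (nestNorm q' (fun l => (‖Θ j k l‖₊ : ℝ≥0∞)) * lpNorm q g) * ‖f k‖₊ := by
          refine ENNReal.tsum_le_tsum fun k => mul_le_mul_left ?_ _
          rw [hgq]
          exact nestNorm_holder hq'' _ _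
      _ = (∑' k, nestNorm q' (fun l => (‖Θ j k l‖₊ : ℝ≥0∞)) * ‖f k‖₊) * lpNorm q g := by
          rw [← ENNReal.tsum_mul_right]
          exact tsum_congr fun k => by ring
      _ ≤ (nestNorm p' (fun k => nestNorm q' (fun l => (‖Θ j k l‖₊ : ℝ≥0∞))) * lpNorm p f) *
            lpNorm q g := by
          refine mul_le_mul_left ?_ _
          rw [hfp]
          exact nestNorm_holder hp'' _ _
      _ = A j * (lpNorm p f * lpNorm q g) := by rw [hAeq j, mul_assoc]
  calc lpNorm r (Tbil Θ f g)
      ≤ nestNorm r (fun j => A j * (lpNorm p f * lpNorm q g)) := nestNorm_mono key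
    _ = nestNorm r A * (lpNorm p f * lpNorm q g) := nestNorm_mul_const hr A _
    _ = nestNorm r A * lpNorm p f * lpNorm q g := by rw [mul_assoc]

end
end

section
/- (Proposition 1) Let d ≥ 1, s₁, s₂, ω ∈ ℝ, and set N₀ = N₀(d, ω, s₁, s₂) := d + ω₊ + (1/2)(|s₁+ω| + |s₂+ω|), where ω₊ := max(ω,0). Suppose the tensor Θ: ℤ^d × ℤ^d × ℤ^d → ℂ satisfies ‖Θ‖_{ω,N} < ∞ for some N > N₀. Then for any 1 ≤ p, q, r ≤ ∞ with 1/p + 1/q = 1/r, the discrete bilinear operator 𝒯_Θ is bounded from ℓ^p_{s₁+ω}(ℤ^d) × ℓ^q_{s₂+ω}(ℤ^d) to ℓ^r_{s₁+s₂}(ℤ^d); more precisely, there exists C > 0 (depending only on d, ω, s₁, s₂, N, p, q, r) such that ‖𝒯_Θ(f,g)‖_{ℓ^r_{s₁+s₂}} ≤ C ‖Θ‖_{ω,N} ‖f‖_{ℓ^p_{s₁+ω}} ‖g‖_{ℓ^q_{s₂+ω}} for all f ∈ ℓ^p_{s₁+ω}(ℤ^d) and g ∈ ℓ^q_{s₂+ω}(ℤ^d).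 -/
open scoped ENNReal NNReal BigOperators

noncomputable section

namespace Aux


lemma jb_pos (x : ℝ) : 0 < jb x := Real.sqrt_pos.2 (by positivity)

lemma one_le_jb (x : ℝ) : 1 ≤ jb x := by
  rw [show (1:ℝ) = Real.sqrt 1 by simp]
  exact Real.sqrt_le_sqrt (by nlinarith)

lemma jb_mono {x y : ℝ} (hx : 0 ≤ x) (h : x ≤ y) : jb x ≤ jb y :=
  Real.sqrt_le_sqrt (by nlinarith)

lemma jb_add (a b : ℝ) : jb (a + b) ≤ Real.sqrt 2 * jb a * jb b := by
  have h : Real.sqrt 2 * jb a * jb b = Real.sqrt (2 * (1 + a ^ 2) * (1 + b ^ 2)) := by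
    rw [jb, jb, Real.sqrt_mul (by positivity), Real.sqrt_mul (by norm_num)]
  rw [h, jb]
  apply Real.sqrt_le_sqrt
  nlinarith [sq_nonneg (a*b - 1), sq_nonneg (a - b), sq_nonneg (a*b)]

lemma jb_two_mul (a : ℝ) : jb (2 * a) ≤ 2 * jb a := by
  have h : 2 * jb a = Real.sqrt (4 * (1 + a ^ 2)) := by
    rw [jb, Real.sqrt_mul (by norm_num), show Real.sqrt 4 = 2 by
      rw [show (4:ℝ) = 2 ^ 2 by norm_num, Real.sqrt_sq (by norm_num)]]
  rw [h, jb]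
  apply Real.sqrt_le_sqrt; nlinarith

lemma znorm_nonneg {d : ℕ} (j : Zd d) : 0 ≤ znorm j := Real.sqrt_nonneg _

lemma znorm_eq_norm {d : ℕ} (j : Zd d) :
    znorm j = ‖(WithLp.equiv 2 (Fin d → ℝ)).symm (fun i => (j i : ℝ))‖ := by
  rw [EuclideanSpace.norm_eq, znorm]
  congr 1
  refine Finset.sum_congr rfl fun i _ => ?_
  rw [Real.norm_eq_abs, sq_abs]; rfl

lemma znorm_sub_le {d : ℕ} (j k l : Zd d) : znorm (j - l) ≤ znorm (j - k) + znorm (k - l) := by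
  rw [znorm_eq_norm, znorm_eq_norm, znorm_eq_norm]
  have : (WithLp.equiv 2 (Fin d → ℝ)).symm (fun i => ((j - l) i : ℝ)) =
      (WithLp.equiv 2 (Fin d → ℝ)).symm (fun i => ((j - k) i : ℝ)) +
      (WithLp.equiv 2 (Fin d → ℝ)).symm (fun i => ((k - l) i : ℝ)) := by
    ext i; simp [Pi.sub_apply]
  rw [this]; exact norm_add_le _ _



lemma znorm_neg {d : ℕ} (j : Zd d) : znorm (-j) = znorm j := by
  unfold znorm
  congr 1
  refine Finset.sum_congr rfl fun i _ => ?_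
  have : ((-j) i : ℝ) = -((j i : ℝ)) := by push_cast [Pi.neg_apply]; ring
  rw [this, neg_sq]

lemma znorm_sub_symm {d : ℕ} (j k : Zd d) : znorm (k - j) = znorm (j - k) := by
  rw [← znorm_neg (j - k), neg_sub]

lemma znorm_le_add {d : ℕ} (j k : Zd d) : znorm j ≤ znorm k + znorm (j - k) := by
  have h := znorm_sub_le j k 0
  have h0 : znorm (k - 0) = znorm k := by rw [sub_zero]
  have h1 : znorm (j - 0) = znorm j := by rw [sub_zero]
  rw [h1, h0] at h; linarith

lemma znorm_le_add' {d : ℕ} (j k : Zd d) : znorm k ≤ znorm j + znorm (j - k) := by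
  have h := znorm_le_add k j
  rwa [znorm_sub_symm] at h

/-- `A ≤ D * B` with everything positive gives `A^t * B^(-t) ≤ D^t` for `t ≥ 0`. -/
lemma ratio_rpow_le {A B D : ℝ} (hA : 0 < A) (hB : 0 < B) (hD : 0 ≤ D)
    (h : A ≤ D * B) {t : ℝ} (ht : 0 ≤ t) : A ^ t * B ^ (-t) ≤ D ^ t := by
  have hBt : (0:ℝ) < B ^ t := Real.rpow_pos_of_pos hB t
  rw [Real.rpow_neg hB.le, ← div_eq_mul_inv, div_le_iff₀ hBt, ← Real.mul_rpow hD hB.le]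
  exact Real.rpow_le_rpow hA.le h ht

lemma peetre1 {d : ℕ} (σ : ℝ) (j k : Zd d) :
    jb (znorm j) ^ σ * jb (znorm k) ^ (-σ) ≤
      (Real.sqrt 2) ^ |σ| * jb (znorm (j - k)) ^ |σ| := by
  have hC := jb_pos (znorm (j - k))
  have hs2 : (0:ℝ) ≤ Real.sqrt 2 := Real.sqrt_nonneg 2
  have key : ∀ a b : Zd d, jb (znorm a) ≤ (Real.sqrt 2 * jb (znorm (a - b))) * jb (znorm b) := by
    intro a b
    calc jb (znorm a) ≤ jb (znorm b + znorm (a - b)) :=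
          jb_mono (znorm_nonneg a) (znorm_le_add a b)
      _ ≤ Real.sqrt 2 * jb (znorm b) * jb (znorm (a - b)) := jb_add _ _
      _ = (Real.sqrt 2 * jb (znorm (a - b))) * jb (znorm b) := by ring
  rw [← Real.mul_rpow hs2 hC.le]
  rcases le_or_gt 0 σ with hσ | hσ
  · rw [abs_of_nonneg hσ]
    exact ratio_rpow_le (jb_pos _) (jb_pos _) (by positivity) (key j k) hσ
  · rw [abs_of_neg hσ]
    have h1 : jb (znorm k) ≤ (Real.sqrt 2 * jb (znorm (k - j))) * jb (znorm j) := key k j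
    have hkj : znorm (k - j) = znorm (j - k) := znorm_sub_symm j k
    rw [hkj] at h1
    have := ratio_rpow_le (jb_pos (znorm k)) (jb_pos (znorm j)) (by positivity) h1
      (t := -σ) (by linarith)
    calc jb (znorm j) ^ σ * jb (znorm k) ^ (-σ)
        = jb (znorm k) ^ (-σ) * jb (znorm j) ^ (-(-σ)) := by rw [neg_neg]; ring
      _ ≤ (Real.sqrt 2 * jb (znorm (j - k))) ^ (-σ) := this

lemma peetre2 {d : ℕ} (ω : ℝ) (j k : Zd d) :
    jb (znorm j + znorm k) ^ ω * jb (znorm j) ^ (-ω) ≤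
      (2 * Real.sqrt 2) ^ max ω 0 * jb (znorm (j - k)) ^ max ω 0 := by
  have hC := jb_pos (znorm (j - k))
  rcases le_or_gt 0 ω with hω | hω
  · rw [max_eq_left hω, ← Real.mul_rpow (by positivity) hC.le]
    apply ratio_rpow_le (jb_pos _) (jb_pos _) (by positivity) _ hω
    have h1 : znorm j + znorm k ≤ 2 * znorm j + znorm (j - k) := by
      have := znorm_le_add' j k; linarith
    calc jb (znorm j + znorm k) ≤ jb (2 * znorm j + znorm (j - k)) :=
          jb_mono (add_nonneg (znorm_nonneg _) (znorm_nonneg _)) h1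
      _ ≤ Real.sqrt 2 * jb (2 * znorm j) * jb (znorm (j - k)) := jb_add _ _
      _ ≤ Real.sqrt 2 * (2 * jb (znorm j)) * jb (znorm (j - k)) :=
          mul_le_mul_of_nonneg_right
            (mul_le_mul_of_nonneg_left (jb_two_mul _) (Real.sqrt_nonneg 2)) hC.le
      _ = 2 * Real.sqrt 2 * jb (znorm (j - k)) * jb (znorm j) := by ring
  · rw [max_eq_right hω.le, Real.rpow_zero, Real.rpow_zero, one_mul]
    have h1 : jb (znorm j) ≤ jb (znorm j + znorm k) :=
      jb_mono (znorm_nonneg j) (by linarith [znorm_nonneg k])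
    have h2 : jb (znorm j + znorm k) ^ ω ≤ jb (znorm j) ^ ω :=
      Real.rpow_le_rpow_of_nonpos (jb_pos _) h1 hω.le
    have h3 : (0:ℝ) < jb (znorm j) ^ ω := Real.rpow_pos_of_pos (jb_pos _) ω
    rw [Real.rpow_neg (jb_pos _).le, ← div_eq_mul_inv, div_le_one h3]
    exact h2



lemma keyJK {d : ℕ} (σ ω : ℝ) (j k : Zd d) :
    jb (znorm j) ^ (σ - ω) * jb (znorm j + znorm k) ^ ω ≤
      ((Real.sqrt 2) ^ |σ| * (2 * Real.sqrt 2) ^ max ω 0) *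
        (jb (znorm k) ^ σ * jb (znorm (j - k)) ^ (|σ| + max ω 0)) := by
  have hA := jb_pos (znorm j)
  have hB := jb_pos (znorm k)
  have hE := jb_pos (znorm j + znorm k)
  have hC := jb_pos (znorm (j - k))
  have e1 : jb (znorm j) ^ (σ - ω) * jb (znorm j + znorm k) ^ ω =
      (jb (znorm j) ^ σ * jb (znorm k) ^ (-σ)) *
      (jb (znorm j + znorm k) ^ ω * jb (znorm j) ^ (-ω)) * jb (znorm k) ^ σ := by
    rw [sub_eq_add_neg, Real.rpow_add hA, Real.rpow_neg hA.le, Real.rpow_neg hB.le]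
    field_simp
  have e2 : jb (znorm (j - k)) ^ (|σ| + max ω 0) =
      jb (znorm (j - k)) ^ |σ| * jb (znorm (j - k)) ^ max ω 0 := Real.rpow_add hC _ _
  rw [e1, e2]
  have h1 := peetre1 σ j k
  have h2 := peetre2 ω j k
  have hσn : (0:ℝ) ≤ (Real.sqrt 2) ^ |σ| * jb (znorm (j - k)) ^ |σ| := by positivity
  have p1 : (0:ℝ) ≤ jb (znorm j) ^ σ * jb (znorm k) ^ (-σ) := by positivity
  have p2 : (0:ℝ) ≤ jb (znorm j + znorm k) ^ ω * jb (znorm j) ^ (-ω) := by positivity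
  calc (jb (znorm j) ^ σ * jb (znorm k) ^ (-σ)) *
      (jb (znorm j + znorm k) ^ ω * jb (znorm j) ^ (-ω)) * jb (znorm k) ^ σ
      ≤ ((Real.sqrt 2) ^ |σ| * jb (znorm (j - k)) ^ |σ|) *
        ((2 * Real.sqrt 2) ^ max ω 0 * jb (znorm (j - k)) ^ max ω 0) * jb (znorm k) ^ σ := by
        apply mul_le_mul_of_nonneg_right _ (Real.rpow_pos_of_pos hB σ).le
        exact mul_le_mul h1 h2 p2 hσn
    _ = ((Real.sqrt 2) ^ |σ| * (2 * Real.sqrt 2) ^ max ω 0) *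
        (jb (znorm k) ^ σ * (jb (znorm (j - k)) ^ |σ| * jb (znorm (j - k)) ^ max ω 0)) := by
        ring

/-- The full kernel bound. -/
lemma kernel {d : ℕ} (s₁ s₂ ω N τ : ℝ) (hτ : 0 ≤ τ)
    (h2N : 2 * N = |s₁ + ω| + |s₂ + ω| + 2 * max ω 0 + 2 * τ) :
    ∃ C₀ : ℝ, 0 < C₀ ∧ ∀ j k l : Zd d,
      jb (znorm j) ^ (s₁ + s₂) *
        (jb (znorm j + znorm k) ^ ω * jb (znorm j + znorm l) ^ ω *
          jb (znorm (j - k) + znorm (j - l)) ^ (-(2 * N))) ≤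
      C₀ * (jb (znorm k) ^ (s₁ + ω) * jb (znorm l) ^ (s₂ + ω) *
        (jb (znorm (j - k)) ^ (-τ) * jb (znorm (j - l)) ^ (-τ))) := by
  set K₁ : ℝ := (Real.sqrt 2) ^ |s₁ + ω| * (2 * Real.sqrt 2) ^ max ω 0 with hK₁
  set K₂ : ℝ := (Real.sqrt 2) ^ |s₂ + ω| * (2 * Real.sqrt 2) ^ max ω 0 with hK₂
  have hK₁p : 0 < K₁ := by positivity
  have hK₂p : 0 < K₂ := by positivity
  refine ⟨K₁ * K₂, by positivity, fun j k l => ?_⟩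
  set u := znorm (j - k) with hu
  set v := znorm (j - l) with hv
  have hup : (0:ℝ) < jb u := jb_pos u
  have hvp : (0:ℝ) < jb v := jb_pos v
  set a : ℝ := |s₁ + ω| + max ω 0 with ha
  set b : ℝ := |s₂ + ω| + max ω 0 with hb
  have han : 0 ≤ a := by positivity
  have hbn : 0 ≤ b := by positivity
  -- Splitting of the decay factor
  have hsplit : jb (u + v) ^ (-(2 * N)) ≤
      (jb u ^ (-a) * jb u ^ (-τ)) * (jb v ^ (-b) * jb v ^ (-τ)) := by
    have h2N' : -(2 * N) = (-(a + τ)) + (-(b + τ)) := by rw [ha, hb]; linarith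
    have huv : jb u ≤ jb (u + v) := jb_mono (znorm_nonneg _) (by
      have := znorm_nonneg (j - l); linarith)
    have hvv : jb v ≤ jb (u + v) := jb_mono (znorm_nonneg _) (by
      have := znorm_nonneg (j - k); linarith)
    have e : jb (u + v) ^ (-(2 * N)) = jb (u + v) ^ (-(a + τ)) * jb (u + v) ^ (-(b + τ)) := by
      rw [← Real.rpow_add (jb_pos _), ← h2N']
    rw [e]
    have l1 : jb (u + v) ^ (-(a + τ)) ≤ jb u ^ (-(a + τ)) :=
      Real.rpow_le_rpow_of_nonpos hup huv (by linarith)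
    have l2 : jb (u + v) ^ (-(b + τ)) ≤ jb v ^ (-(b + τ)) :=
      Real.rpow_le_rpow_of_nonpos hvp hvv (by linarith)
    have e1 : jb u ^ (-(a + τ)) = jb u ^ (-a) * jb u ^ (-τ) := by
      rw [← Real.rpow_add hup]; ring_nf
    have e2 : jb v ^ (-(b + τ)) = jb v ^ (-b) * jb v ^ (-τ) := by
      rw [← Real.rpow_add hvp]; ring_nf
    rw [← e1, ← e2]
    exact mul_le_mul l1 l2 (Real.rpow_pos_of_pos (jb_pos _) _).le
      (Real.rpow_pos_of_pos hup _).le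
  -- key inequalities
  have k1 := keyJK (s₁ + ω) ω j k
  have k2 := keyJK (s₂ + ω) ω j l
  have es : jb (znorm j) ^ (s₁ + s₂) =
      jb (znorm j) ^ ((s₁ + ω) - ω) * jb (znorm j) ^ ((s₂ + ω) - ω) := by
    rw [← Real.rpow_add (jb_pos _)]; ring_nf
  -- assemble
  have cancel : ∀ w : ℝ, 0 < w → ∀ c : ℝ, w ^ c * w ^ (-c) = 1 := fun w hw c => by
    rw [← Real.rpow_add hw]; simp
  calc jb (znorm j) ^ (s₁ + s₂) *
        (jb (znorm j + znorm k) ^ ω * jb (znorm j + znorm l) ^ ω * jb (u + v) ^ (-(2 * N)))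
      ≤ jb (znorm j) ^ (s₁ + s₂) *
        (jb (znorm j + znorm k) ^ ω * jb (znorm j + znorm l) ^ ω *
          ((jb u ^ (-a) * jb u ^ (-τ)) * (jb v ^ (-b) * jb v ^ (-τ)))) := by
        apply mul_le_mul_of_nonneg_left _ (Real.rpow_pos_of_pos (jb_pos _) _).le
        exact mul_le_mul_of_nonneg_left hsplit
          (mul_nonneg (Real.rpow_pos_of_pos (jb_pos _) _).le (Real.rpow_pos_of_pos (jb_pos _) _).le)
    _ = (jb (znorm j) ^ ((s₁ + ω) - ω) * jb (znorm j + znorm k) ^ ω) *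
        (jb (znorm j) ^ ((s₂ + ω) - ω) * jb (znorm j + znorm l) ^ ω) *
        (jb u ^ (-a) * jb v ^ (-b)) * (jb u ^ (-τ) * jb v ^ (-τ)) := by
        rw [es]; ring
    _ ≤ (K₁ * (jb (znorm k) ^ (s₁ + ω) * jb u ^ a)) *
        (K₂ * (jb (znorm l) ^ (s₂ + ω) * jb v ^ b)) *
        (jb u ^ (-a) * jb v ^ (-b)) * (jb u ^ (-τ) * jb v ^ (-τ)) := by
        have q1 : (0:ℝ) ≤ jb u ^ (-a) * jb v ^ (-b) := by positivity
        have q2 : (0:ℝ) ≤ jb u ^ (-τ) * jb v ^ (-τ) := by positivity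
        apply mul_le_mul_of_nonneg_right _ q2
        apply mul_le_mul_of_nonneg_right _ q1
        have r1 : (0:ℝ) ≤ jb (znorm j) ^ ((s₂ + ω) - ω) * jb (znorm j + znorm l) ^ ω :=
          mul_nonneg (Real.rpow_pos_of_pos (jb_pos _) _).le (Real.rpow_pos_of_pos (jb_pos _) _).le
        have r2 : (0:ℝ) ≤ K₁ * (jb (znorm k) ^ (s₁ + ω) * jb u ^ a) :=
          mul_nonneg hK₁p.le (mul_nonneg (Real.rpow_pos_of_pos (jb_pos _) _).le (Real.rpow_pos_of_pos (jb_pos _) _).le)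
        exact mul_le_mul k1 k2 r1 r2
    _ = (K₁ * K₂) * (jb (znorm k) ^ (s₁ + ω) * jb (znorm l) ^ (s₂ + ω) *
        (jb u ^ (-τ) * jb v ^ (-τ))) * ((jb u ^ a * jb u ^ (-a)) * (jb v ^ b * jb v ^ (-b))) := by
        ring
    _ = (K₁ * K₂) * (jb (znorm k) ^ (s₁ + ω) * jb (znorm l) ^ (s₂ + ω) *
        (jb u ^ (-τ) * jb v ^ (-τ))) := by
        rw [cancel _ hup, cancel _ hvp, mul_one, mul_one]



set_option maxHeartbeats 1000000 in
lemma summable_int_weight {σ : ℝ} (hσ : 1 / 2 < σ) :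
    Summable (fun m : ℤ => (1 + (m : ℝ) ^ 2) ^ (-σ)) := by
  have h2σ : 1 < 2 * σ := by linarith
  have hs := Real.summable_abs_int_rpow h2σ
  have hind : Summable (fun m : ℤ => if m = 0 then (1:ℝ) else 0) := by
    apply summable_of_ne_finset_zero (s := {0})
    intro m hm
    simp only [Finset.mem_singleton] at hm
    simp [hm]
  apply Summable.of_nonneg_of_le
    (f := fun m : ℤ => |(m : ℝ)| ^ (-(2 * σ)) + if m = 0 then (1:ℝ) else 0)
    (fun m => by positivity) _ (hs.add hind)
  intro m
  rcases eq_or_ne m 0 with hm | hm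
  · subst hm; simp
    exact Real.rpow_nonneg le_rfl _
  · have hm' : (1:ℝ) ≤ |(m:ℝ)| := by
      have : (1:ℤ) ≤ |m| := Int.one_le_abs (by exact_mod_cast hm)
      calc (1:ℝ) ≤ (|m| : ℤ) := by exact_mod_cast this
        _ = |(m:ℝ)| := by push_cast; rfl
    have hb : |(m:ℝ)| ^ (2*σ) ≤ (1 + (m:ℝ)^2) ^ σ := by
      have e : ((m:ℝ)^2) ^ σ = |(m:ℝ)| ^ (2*σ) := by
        rw [← sq_abs, ← Real.rpow_natCast |(m:ℝ)| 2, ← Real.rpow_mul (abs_nonneg _)]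
        norm_num
      rw [← e]
      exact Real.rpow_le_rpow (by positivity) (by linarith [sq_nonneg (m:ℝ)]) (by linarith)
    have hpos : (0:ℝ) < |(m:ℝ)| ^ (2*σ) := Real.rpow_pos_of_pos (by linarith) _
    have hpos2 : (0:ℝ) < (1 + (m:ℝ)^2) ^ σ := Real.rpow_pos_of_pos (by positivity) _
    have : (1 + (m:ℝ)^2) ^ (-σ) ≤ |(m:ℝ)| ^ (-(2*σ)) := by
      rw [Real.rpow_neg (by positivity), Real.rpow_neg (abs_nonneg _)]
      exact inv_anti₀ hpos hb
    simp only [hm, if_false, add_zero]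
    exact this

lemma tsum_pi_prod (g : ℤ → ℝ≥0∞) :
    ∀ n : ℕ, ∑' v : Fin n → ℤ, ∏ i, g (v i) = (∑' m : ℤ, g m) ^ n := by
  intro n
  induction n with
  | zero =>
      rw [pow_zero]
      have : ∀ v : Fin 0 → ℤ, (∏ i, g (v i)) = 1 := fun v => by simp
      simp only [this]
      exact tsum_eq_single (default : Fin 0 → ℤ)
        (fun b hb => (hb (Subsingleton.elim b _)).elim)
  | succ n ih =>
      rw [← (Fin.consEquiv (fun _ : Fin (n+1) => ℤ)).tsum_eq (fun v => ∏ i, g (v i))]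
      have e : ∀ p : ℤ × (Fin n → ℤ),
          (∏ i, g (((Fin.consEquiv (fun _ : Fin (n+1) => ℤ)) p) i)) = g p.1 * ∏ i, g (p.2 i) := by
        intro p
        rw [Fin.prod_univ_succ]
        simp [Fin.consEquiv]
      simp only [e]
      rw [ENNReal.tsum_prod']
      calc (∑' a : ℤ, ∑' w : Fin n → ℤ, g a * ∏ i, g (w i))
          = ∑' a : ℤ, g a * ∑' w : Fin n → ℤ, ∏ i, g (w i) := by
            congr 1; funext a; exact ENNReal.tsum_mul_left
        _ = (∑' m : ℤ, g m) * (∑' m : ℤ, g m) ^ n := by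
            rw [ih, ENNReal.tsum_mul_right]
        _ = (∑' m : ℤ, g m) ^ (n + 1) := by ring

lemma jb_prod_bound {d : ℕ} (hd : 1 ≤ d) {τ : ℝ} (hτ : 0 < τ) (v : Zd d) :
    jb (znorm v) ^ (-τ) ≤ ∏ i, (1 + ((v i : ℝ)) ^ 2) ^ (-(τ / (2 * d))) := by
  have hdpos : (0:ℝ) < d := by exact_mod_cast hd
  set T : ℝ := 1 + ∑ i, ((v i : ℝ)) ^ 2 with hT
  have hT1 : (1:ℝ) ≤ T := by
    have : (0:ℝ) ≤ ∑ i, ((v i : ℝ)) ^ 2 := by positivity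
    simp [hT]; linarith
  have hjb : jb (znorm v) = T ^ ((1:ℝ)/2) := by
    rw [jb, znorm, Real.sq_sqrt (by positivity), ← hT, Real.sqrt_eq_rpow]
  have hprod : (∏ i, (1 + ((v i : ℝ)) ^ 2)) ≤ T ^ (d:ℕ) := by
    have : ∀ i : Fin d, 1 + ((v i : ℝ)) ^ 2 ≤ T := by
      intro i
      have : ((v i : ℝ)) ^ 2 ≤ ∑ i', ((v i' : ℝ)) ^ 2 :=
        Finset.single_le_sum (f := fun i' => ((v i' : ℝ)) ^ 2)
          (fun i' _ => by positivity) (Finset.mem_univ i)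
      simp [hT]; linarith
    calc (∏ i, (1 + ((v i : ℝ)) ^ 2)) ≤ ∏ _i : Fin d, T :=
          Finset.prod_le_prod (fun i _ => by positivity) (fun i _ => this i)
      _ = T ^ (d:ℕ) := by rw [Finset.prod_const, Finset.card_univ, Fintype.card_fin]
  set σ' : ℝ := τ / (2 * d) with hσ'
  have hσ'pos : 0 < σ' := by positivity
  set P : ℝ := ∏ i, (1 + ((v i : ℝ)) ^ 2) with hP
  have hPpos : 0 < P := Finset.prod_pos (fun i _ => by positivity)
  have hTpos : (0:ℝ) < T := by linarith
  have hstep : P ^ σ' ≤ T ^ (τ / 2) := by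
    calc P ^ σ' ≤ (T ^ (d:ℕ)) ^ σ' := Real.rpow_le_rpow hPpos.le hprod hσ'pos.le
      _ = (T ^ ((d:ℕ):ℝ)) ^ σ' := by rw [Real.rpow_natCast]
      _ = T ^ (((d:ℕ):ℝ) * σ') := by rw [← Real.rpow_mul hTpos.le]
      _ = T ^ (τ / 2) := by
          congr 1
          rw [hσ']
          field_simp
  have hL : jb (znorm v) ^ (-τ) = (T ^ (τ / 2))⁻¹ := by
    rw [hjb, ← Real.rpow_mul hTpos.le, ← Real.rpow_neg hTpos.le]
    congr 1
    ring
  have hR : (∏ i, (1 + ((v i : ℝ)) ^ 2) ^ (-σ')) = (P ^ σ')⁻¹ := by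
    rw [Real.finset_prod_rpow _ _ (fun i _ => by positivity), ← hP,
      Real.rpow_neg hPpos.le]
  rw [hL]
  calc (T ^ (τ / 2))⁻¹ ≤ (P ^ σ')⁻¹ :=
        inv_anti₀ (Real.rpow_pos_of_pos hPpos _) hstep
    _ = ∏ i, (1 + ((v i : ℝ)) ^ 2) ^ (-σ') := hR.symm



lemma toReal_one_le {p : ℝ≥0∞} (hp : 1 ≤ p) (hpt : p ≠ ∞) : 1 ≤ p.toReal := by
  have := ENNReal.toReal_mono hpt hp
  simpa using this

lemma tsum_holder {ι : Type*} [Countable ι] (f g : ι → ℝ≥0∞) {a b : ℝ}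
    (hab : a.HolderConjugate b) :
    ∑' i, f i * g i ≤ (∑' i, f i ^ a) ^ (1/a) * (∑' i, g i ^ b) ^ (1/b) := by
  letI : MeasurableSpace ι := ⊤
  haveI : MeasurableSingletonClass ι := ⟨fun _ => trivial⟩
  have h := ENNReal.lintegral_mul_le_Lp_mul_Lq (MeasureTheory.Measure.count) hab
    (measurable_from_top (f := f)).aemeasurable (measurable_from_top (f := g)).aemeasurable
  simp only [Pi.mul_apply] at h
  rwa [MeasureTheory.lintegral_count, MeasureTheory.lintegral_count,
    MeasureTheory.lintegral_count] at h

lemma nestNorm_mono {ι : Type*} (p : ℝ≥0∞) {F G : ι → ℝ≥0∞} (h : ∀ i, F i ≤ G i) :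
    nestNorm p F ≤ nestNorm p G := by
  unfold nestNorm
  split_ifs with hp
  · exact iSup_mono h
  · exact ENNReal.rpow_le_rpow
      (ENNReal.tsum_le_tsum (fun i => ENNReal.rpow_le_rpow (h i) ENNReal.toReal_nonneg))
      (by positivity)

lemma nestNorm_const_mul {ι : Type*} {p : ℝ≥0∞} (hp : 1 ≤ p) (c : ℝ≥0∞) (F : ι → ℝ≥0∞) :
    nestNorm p (fun i => c * F i) = c * nestNorm p F := by
  unfold nestNorm
  split_ifs with hpt
  · exact (ENNReal.mul_iSup c F).symm
  · have hP : 1 ≤ p.toReal := toReal_one_le hp hpt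
    have hP0 : p.toReal ≠ 0 := by linarith
    calc (∑' i, (c * F i) ^ p.toReal) ^ (1 / p.toReal)
        = (c ^ p.toReal * ∑' i, F i ^ p.toReal) ^ (1 / p.toReal) := by
          rw [← ENNReal.tsum_mul_left]
          exact congrArg (fun z => z ^ (1 / p.toReal))
            (tsum_congr fun i => ENNReal.mul_rpow_of_nonneg _ _ ENNReal.toReal_nonneg)
      _ = c * (∑' i, F i ^ p.toReal) ^ (1 / p.toReal) := by
          rw [ENNReal.mul_rpow_of_nonneg _ _ (by positivity), ← ENNReal.rpow_mul,
            mul_one_div, div_self hP0, ENNReal.rpow_one]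

/-- Hölder's inequality for `nestNorm`. -/
lemma nestNorm_holder {ι : Type*} [Countable ι] {p q r : ℝ≥0∞} (hp : 1 ≤ p) (hq : 1 ≤ q)
    (hpqr : p⁻¹ + q⁻¹ = r⁻¹) (A B : ι → ℝ≥0∞) :
    nestNorm r (fun i => A i * B i) ≤ nestNorm p A * nestNorm q B := by
  have hp0 : p ≠ 0 := by intro h; rw [h] at hp; exact absurd hp (by simp)
  have hq0 : q ≠ 0 := by intro h; rw [h] at hq; exact absurd hq (by simp)
  by_cases hpt : p = ∞
  · by_cases hqt : q = ∞
    · have hrt : r = ∞ := by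
        rw [hpt, hqt] at hpqr; simp at hpqr
        exact ENNReal.inv_eq_zero.mp hpqr.symm
      subst hpt; subst hqt; subst hrt
      simp only [nestNorm, if_pos rfl]
      exact iSup_le fun i => mul_le_mul' (le_iSup A i) (le_iSup B i)
    · -- p = ∞, r = q
      have hrq : r = q := by
        rw [hpt] at hpqr; simp at hpqr
        exact hpqr.symm
      subst hrq
      have hQ : 0 ≤ r.toReal := ENNReal.toReal_nonneg
      subst hpt
      simp only [nestNorm, if_pos rfl, if_neg hqt]
      calc (∑' i, (A i * B i) ^ r.toReal) ^ (1 / r.toReal)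
          ≤ (∑' i, ((⨆ i', A i') * B i) ^ r.toReal) ^ (1 / r.toReal) := by
            apply ENNReal.rpow_le_rpow _ (by positivity)
            apply ENNReal.tsum_le_tsum
            intro i
            exact ENNReal.rpow_le_rpow (mul_le_mul' (le_iSup A i) le_rfl) hQ
        _ = (⨆ i', A i') * (∑' i, B i ^ r.toReal) ^ (1 / r.toReal) := by
            have hq1 : 1 ≤ r.toReal := toReal_one_le hq hqt
            have hq0' : r.toReal ≠ 0 := by linarith
            calc (∑' i, ((⨆ i', A i') * B i) ^ r.toReal) ^ (1 / r.toReal)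
                = ((⨆ i', A i') ^ r.toReal * ∑' i, B i ^ r.toReal) ^ (1 / r.toReal) := by
                  rw [← ENNReal.tsum_mul_left]
                  exact congrArg (fun z => z ^ (1 / r.toReal))
                    (tsum_congr fun i => ENNReal.mul_rpow_of_nonneg _ _ hQ)
              _ = _ := by
                  rw [ENNReal.mul_rpow_of_nonneg _ _ (by positivity), ← ENNReal.rpow_mul,
                    mul_one_div, div_self hq0', ENNReal.rpow_one]
  · by_cases hqt : q = ∞
    · -- q = ∞, r = p
      have hrq : r = p := by
        rw [hqt] at hpqr; simp at hpqr
        exact hpqr.symm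
      subst hrq
      have hQ : 0 ≤ r.toReal := ENNReal.toReal_nonneg
      subst hqt
      simp only [nestNorm, if_pos rfl, if_neg hpt]
      calc (∑' i, (A i * B i) ^ r.toReal) ^ (1 / r.toReal)
          ≤ (∑' i, (A i * ⨆ i', B i') ^ r.toReal) ^ (1 / r.toReal) := by
            apply ENNReal.rpow_le_rpow _ (by positivity)
            apply ENNReal.tsum_le_tsum
            intro i
            exact ENNReal.rpow_le_rpow (mul_le_mul' le_rfl (le_iSup B i)) hQ
        _ = (∑' i, A i ^ r.toReal) ^ (1 / r.toReal) * ⨆ i', B i' := by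
            have hq1 : 1 ≤ r.toReal := toReal_one_le hp hpt
            have hq0' : r.toReal ≠ 0 := by linarith
            calc (∑' i, (A i * ⨆ i', B i') ^ r.toReal) ^ (1 / r.toReal)
                = ((∑' i, A i ^ r.toReal) * (⨆ i', B i') ^ r.toReal) ^ (1 / r.toReal) := by
                  rw [← ENNReal.tsum_mul_right]
                  exact congrArg (fun z => z ^ (1 / r.toReal))
                    (tsum_congr fun i => ENNReal.mul_rpow_of_nonneg _ _ hQ)
              _ = _ := by
                  rw [ENNReal.mul_rpow_of_nonneg _ _ (by positivity), ← ENNReal.rpow_mul,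
                    mul_one_div, div_self hq0', ENNReal.rpow_one]
    · -- both finite
      have hrt : r ≠ ∞ := by
        intro h
        rw [h] at hpqr; simp at hpqr
        exact hpt hpqr.1
      have hr0 : r ≠ 0 := by
        intro h
        rw [h] at hpqr
        simp at hpqr
        rcases hpqr with h1 | h1
        · exact hp0 h1
        · exact hq0 h1
      set P := p.toReal with hP
      set Q := q.toReal with hQ
      set R := r.toReal with hR
      have hP1 : 1 ≤ P := toReal_one_le hp hpt
      have hQ1 : 1 ≤ Q := toReal_one_le hq hqt
      have hP0 : 0 < P := by linarith
      have hQ0 : 0 < Q := by linarith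
      have hR0 : 0 < R := ENNReal.toReal_pos hr0 hrt
      have hsum : 1 / P + 1 / Q = 1 / R := by
        have := congrArg ENNReal.toReal hpqr
        rwa [ENNReal.toReal_add (by simp [hp0]) (by simp [hq0]),
          ENNReal.toReal_inv, ENNReal.toReal_inv, ENNReal.toReal_inv,
          ← one_div, ← one_div, ← one_div] at this
      have hRP : R < P := by
        have h1 : 1 / P < 1 / R := by
          have : 0 < 1 / Q := by positivity
          linarith
        rw [div_lt_div_iff₀ hP0 hR0] at h1; linarith
      have hRQ : R < Q := by
        have h1 : 1 / Q < 1 / R := by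
          have : 0 < 1 / P := by positivity
          linarith
        rw [div_lt_div_iff₀ hQ0 hR0] at h1; linarith
      have hconj : (P / R).HolderConjugate (Q / R) := by
        rw [Real.holderConjugate_iff]
        constructor
        · rw [lt_div_iff₀ hR0]; linarith
        · rw [inv_div, inv_div]
          rw [div_add_div _ _ (by positivity : P ≠ 0) (by positivity : Q ≠ 0)]
          rw [div_eq_one_iff_eq (by positivity)]
          field_simp at hsum ⊢
          linarith [hsum]
      simp only [nestNorm, if_neg hpt, if_neg hqt, if_neg hrt]
      have key : ∑' i, (A i * B i) ^ R ≤
          (∑' i, A i ^ P) ^ (R / P) * (∑' i, B i ^ Q) ^ (R / Q) := by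
        have h1 : ∀ i, (A i * B i) ^ R = (A i ^ R) * (B i ^ R) := fun i =>
          ENNReal.mul_rpow_of_nonneg _ _ hR0.le
        have h2 := tsum_holder (fun i => A i ^ R) (fun i => B i ^ R) hconj
        simp only [h1]
        calc ∑' i, A i ^ R * B i ^ R
            ≤ (∑' i, (A i ^ R) ^ (P / R)) ^ (1 / (P / R)) *
              (∑' i, (B i ^ R) ^ (Q / R)) ^ (1 / (Q / R)) := h2
          _ = (∑' i, A i ^ P) ^ (R / P) * (∑' i, B i ^ Q) ^ (R / Q) := by
              congr 1
              · congr 1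
                · congr 1; funext i
                  rw [← ENNReal.rpow_mul]
                  congr 1; field_simp
                · rw [one_div_div]
              · congr 1
                · congr 1; funext i
                  rw [← ENNReal.rpow_mul]
                  congr 1; field_simp
                · rw [one_div_div]
      calc (∑' i, (A i * B i) ^ R) ^ (1 / R)
          ≤ ((∑' i, A i ^ P) ^ (R / P) * (∑' i, B i ^ Q) ^ (R / Q)) ^ (1 / R) :=
            ENNReal.rpow_le_rpow key (by positivity)
        _ = (∑' i, A i ^ P) ^ (1 / P) * (∑' i, B i ^ Q) ^ (1 / Q) := by
            rw [ENNReal.mul_rpow_of_nonneg _ _ (by positivity), ← ENNReal.rpow_mul,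
              ← ENNReal.rpow_mul]
            congr 2
            · field_simp
            · field_simp


/-- Young's inequality `‖H ⋆ F‖_p ≤ ‖H‖_1 ‖F‖_p` for `ℓ^p(ℤ^d)`, `ENNReal`-valued. -/
lemma young {d : ℕ} {p : ℝ≥0∞} (hp : 1 ≤ p) (H F : Zd d → ℝ≥0∞)
    (hH0 : ∀ v, H v ≠ 0) (hHt : ∀ v, H v ≠ ⊤) :
    nestNorm p (fun j => ∑' k, H (j - k) * F k) ≤ (∑' v, H v) * nestNorm p F := by
  set S := ∑' v, H v with hSdef
  have hS0 : S ≠ 0 := by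
    intro h
    have h1 : H 0 ≤ S := ENNReal.le_tsum 0
    rw [h] at h1
    exact hH0 0 (le_antisymm h1 zero_le)
  have hshift' : ∀ j : Zd d, ∑' k, H (j - k) = S := fun j => (Equiv.subLeft j).tsum_eq H
  have hshift : ∀ k : Zd d, ∑' j, H (j - k) = S := fun k => (Equiv.subRight k).tsum_eq H
  by_cases hpt : p = ∞
  · subst hpt
    simp only [nestNorm, if_pos rfl]
    apply iSup_le
    intro j
    calc ∑' k, H (j - k) * F k
        ≤ ∑' k, H (j - k) * ⨆ i, F i :=
          ENNReal.tsum_le_tsum (fun k => mul_le_mul' le_rfl (le_iSup F k))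
      _ = (∑' k, H (j - k)) * ⨆ i, F i := ENNReal.tsum_mul_right
      _ = S * ⨆ i, F i := by rw [hshift' j]
  · set P := p.toReal with hPdef
    have hP1 : 1 ≤ P := toReal_one_le hp hpt
    have hP0 : 0 < P := by linarith
    have claim : ∀ j : Zd d,
        (∑' k, H (j - k) * F k) ^ P ≤ S ^ (P - 1) * ∑' k, H (j - k) * F k ^ P := by
      intro j
      rcases eq_or_lt_of_le hP1 with hP | hP
      · have e1 : ∀ k : Zd d, F k ^ P = F k := fun k => by rw [← hP, ENNReal.rpow_one]
        simp only [e1, ← hP, ENNReal.rpow_one]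
        rw [sub_self, ENNReal.rpow_zero, one_mul]
      · set P' : ℝ := P / (P - 1) with hP'def
        have hP'1 : 1 < P' := by
          rw [hP'def, lt_div_iff₀ (by linarith)]
          linarith
        have hconj : P'.HolderConjugate P := by
          rw [Real.holderConjugate_iff]
          constructor
          · exact hP'1
          · rw [hP'def]
            rw [inv_div]
            field_simp
            ring
        have hsplitH : ∀ v : Zd d, H v = H v ^ (1/P') * H v ^ (1/P) := by
          intro v
          rw [← ENNReal.rpow_add _ _ (hH0 v) (hHt v)]
          rw [show 1/P' + 1/P = 1 by
            have := hconj.inv_add_inv_eq_one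
            rw [one_div, one_div]; exact this]
          rw [ENNReal.rpow_one]
        have step1 : ∑' k, H (j - k) * F k ≤
            S ^ (1/P') * (∑' k, H (j - k) * F k ^ P) ^ (1/P) := by
          calc ∑' k, H (j - k) * F k
              = ∑' k, (H (j - k) ^ (1/P')) * (H (j - k) ^ (1/P) * F k) := by
                exact tsum_congr fun k => by rw [← mul_assoc, ← hsplitH (j - k)]
            _ ≤ (∑' k, (H (j - k) ^ (1/P')) ^ P') ^ (1/P') *
                (∑' k, (H (j - k) ^ (1/P) * F k) ^ P) ^ (1/P) :=
                tsum_holder _ _ hconj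
            _ = S ^ (1/P') * (∑' k, H (j - k) * F k ^ P) ^ (1/P) := by
                congr 2
                · calc ∑' k, (H (j - k) ^ (1/P')) ^ P'
                      = ∑' k, H (j - k) := by
                        refine tsum_congr fun k => ?_
                        rw [← ENNReal.rpow_mul, one_div,
                          inv_mul_cancel₀ (by linarith : P' ≠ 0), ENNReal.rpow_one]
                    _ = S := hshift' j
                · refine tsum_congr fun k => ?_
                  rw [ENNReal.mul_rpow_of_nonneg _ _ hP0.le, ← ENNReal.rpow_mul, one_div,
                    inv_mul_cancel₀ (by linarith : P ≠ 0), ENNReal.rpow_one]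
        calc (∑' k, H (j - k) * F k) ^ P
            ≤ (S ^ (1/P') * (∑' k, H (j - k) * F k ^ P) ^ (1/P)) ^ P :=
              ENNReal.rpow_le_rpow step1 hP0.le
          _ = S ^ (P - 1) * ∑' k, H (j - k) * F k ^ P := by
              rw [ENNReal.mul_rpow_of_nonneg _ _ hP0.le, ← ENNReal.rpow_mul,
                ← ENNReal.rpow_mul,
                show (1/P) * P = 1 by field_simp,
                show (1/P') * P = P - 1 by
                  rw [hP'def, one_div_div, div_mul_cancel₀ _ (by linarith : P ≠ 0)],
                ENNReal.rpow_one]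
    by_cases hSt : S = ⊤
    · rcases eq_or_ne (nestNorm p F) 0 with hF0 | hFne
      · -- F is identically zero
        have hF : ∀ k, F k = 0 := by
          have h0 : (∑' i, F i ^ P) ^ (1/P) = 0 := by
            simpa [nestNorm, if_neg hpt] using hF0
          rw [ENNReal.rpow_eq_zero_iff] at h0
          have hsum0 : ∑' i, F i ^ P = 0 := by
            rcases h0 with ⟨h2, _⟩ | ⟨_, h3⟩
            · exact h2
            · exfalso
              have : (0:ℝ) < 1/P := by positivity
              linarith
          intro k
          have h1 : F k ^ P = 0 := le_antisymm (hsum0 ▸ ENNReal.le_tsum k) zero_le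
          rw [ENNReal.rpow_eq_zero_iff] at h1
          rcases h1 with ⟨h4, _⟩ | ⟨_, h5⟩
          · exact h4
          · exfalso; linarith
        have hz : ∀ j : Zd d, (∑' k, H (j - k) * F k) = 0 := fun j => by simp [hF]
        simp only [nestNorm, if_neg hpt, hz]
        rw [ENNReal.zero_rpow_of_pos hP0, tsum_zero, ENNReal.zero_rpow_of_pos (by positivity)]
        exact zero_le
      · rw [hSt, ENNReal.top_mul hFne]
        exact le_top
    · simp only [nestNorm, if_neg hpt]
      calc (∑' j, (∑' k, H (j - k) * F k) ^ P) ^ (1/P)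
          ≤ (∑' j, S ^ (P - 1) * ∑' k, H (j - k) * F k ^ P) ^ (1/P) :=
            ENNReal.rpow_le_rpow (ENNReal.tsum_le_tsum claim) (by positivity)
        _ = (S ^ (P - 1) * (S * ∑' k, F k ^ P)) ^ (1/P) := by
            rw [ENNReal.tsum_mul_left]
            congr 2
            calc ∑' j, ∑' k, H (j - k) * F k ^ P
                = ∑' k, ∑' j, H (j - k) * F k ^ P := ENNReal.tsum_comm
              _ = ∑' k, (∑' j, H (j - k)) * F k ^ P := by
                  exact tsum_congr fun k => ENNReal.tsum_mul_right
              _ = ∑' k, S * F k ^ P := by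
                  exact tsum_congr fun k => by rw [hshift k]
              _ = S * ∑' k, F k ^ P := ENNReal.tsum_mul_left
        _ = S * (∑' k, F k ^ P) ^ (1/P) := by
            have e1 : S ^ (P - 1) * S = S ^ P := by
              nth_rewrite 2 [← ENNReal.rpow_one S]
              rw [← ENNReal.rpow_add _ _ hS0 hSt]
              norm_num
            rw [← mul_assoc, e1, ENNReal.mul_rpow_of_nonneg _ _ (by positivity),
              ← ENNReal.rpow_mul, mul_one_div, div_self (by linarith : P ≠ 0),
              ENNReal.rpow_one]


lemma ofReal_norm_tsum_le {ι : Type*} (x : ι → ℂ) :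
    ENNReal.ofReal ‖∑' i, x i‖ ≤ ∑' i, ENNReal.ofReal ‖x i‖ := by
  by_cases h : Summable fun i => ‖x i‖
  · rw [← ENNReal.ofReal_tsum_of_nonneg (fun i => norm_nonneg _) h]
    exact ENNReal.ofReal_le_ofReal (norm_tsum_le_tsum_norm h)
  · have heq : ∀ i, ENNReal.ofReal ‖x i‖ = ((‖x i‖₊ : ℝ≥0) : ℝ≥0∞) := fun i =>
      by rw [← coe_nnnorm]; exact ENNReal.ofReal_coe_nnreal
    have htop : ∑' i, ENNReal.ofReal ‖x i‖ = ⊤ := by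
      simp only [heq]
      by_contra ht
      apply h
      have hs := ENNReal.tsum_coe_ne_top_iff_summable.mp ht
      have := NNReal.summable_coe.mpr hs
      simpa [coe_nnnorm] using this
    rw [htop]
    exact le_top

lemma S_ne_top {d : ℕ} (hd : 1 ≤ d) {τ : ℝ} (hτd : (d:ℝ) < τ) :
    (∑' v : Zd d, ENNReal.ofReal (jb (znorm v) ^ (-τ))) ≠ ⊤ := by
  have hdpos : (0:ℝ) < d := by exact_mod_cast hd
  have hτ0 : 0 < τ := lt_of_le_of_lt hdpos.le hτd
  set σ' : ℝ := τ / (2 * d) with hσ'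
  have hσ : 1/2 < σ' := by
    rw [hσ', lt_div_iff₀ (by positivity)]
    linarith
  have hsum := summable_int_weight hσ
  have hbound : ∀ v : Zd d, ENNReal.ofReal (jb (znorm v) ^ (-τ)) ≤
      ∏ i, ENNReal.ofReal ((1 + ((v i : ℝ)) ^ 2) ^ (-σ')) := by
    intro v
    calc ENNReal.ofReal (jb (znorm v) ^ (-τ))
        ≤ ENNReal.ofReal (∏ i, (1 + ((v i : ℝ)) ^ 2) ^ (-σ')) :=
          ENNReal.ofReal_le_ofReal (jb_prod_bound hd hτ0 v)
      _ = ∏ i, ENNReal.ofReal ((1 + ((v i : ℝ)) ^ 2) ^ (-σ')) :=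
          ENNReal.ofReal_prod_of_nonneg (fun i _ => by positivity)
  have hle : (∑' v : Zd d, ENNReal.ofReal (jb (znorm v) ^ (-τ))) ≤
      (∑' m : ℤ, ENNReal.ofReal ((1 + (m : ℝ) ^ 2) ^ (-σ'))) ^ d := by
    calc (∑' v : Zd d, ENNReal.ofReal (jb (znorm v) ^ (-τ)))
        ≤ ∑' v : Zd d, ∏ i, ENNReal.ofReal ((1 + ((v i : ℝ)) ^ 2) ^ (-σ')) :=
          ENNReal.tsum_le_tsum hbound
      _ = (∑' m : ℤ, ENNReal.ofReal ((1 + (m : ℝ) ^ 2) ^ (-σ'))) ^ d :=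
          tsum_pi_prod (fun m : ℤ => ENNReal.ofReal ((1 + (m : ℝ) ^ 2) ^ (-σ'))) d
  have hbase : (∑' m : ℤ, ENNReal.ofReal ((1 + (m : ℝ) ^ 2) ^ (-σ'))) ≠ ⊤ := by
    rw [← ENNReal.ofReal_tsum_of_nonneg (fun m => by positivity) hsum]
    exact ENNReal.ofReal_ne_top
  exact ne_top_of_le_ne_top (ENNReal.pow_ne_top hbase) hle

lemma one_le_S {d : ℕ} (τ : ℝ) :
    1 ≤ ∑' v : Zd d, ENNReal.ofReal (jb (znorm v) ^ (-τ)) := by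
  have h0 : ENNReal.ofReal (jb (znorm (0 : Zd d)) ^ (-τ)) = 1 := by
    have hz : znorm (0 : Zd d) = 0 := by
      simp [znorm]
    rw [hz, show jb 0 = 1 by rw [jb]; norm_num, Real.one_rpow, ENNReal.ofReal_one]
  calc (1:ℝ≥0∞) = ENNReal.ofReal (jb (znorm (0 : Zd d)) ^ (-τ)) := h0.symm
    _ ≤ _ := ENNReal.le_tsum (0 : Zd d)

end Aux

/-- Proposition 1: if `‖Θ‖_{ω,N} < ∞` for some `N > N₀ = d + ω₊ +
(|s₁+ω|+|s₂+ω|)/2`, then `𝒯_Θ : ℓ^p_{s₁+ω} × ℓ^q_{s₂+ω} → ℓ^r_{s₁+s₂}` is bounded, with a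
constant depending only on `d, ω, s₁, s₂, N, p, q, r`. -/
theorem stmt_2 {d : ℕ} (hd : 1 ≤ d) (s₁ s₂ ω N : ℝ)
    (hN : N > (d : ℝ) + max ω 0 + (|s₁ + ω| + |s₂ + ω|) / 2)
    (p q r : ℝ≥0∞) (hp : 1 ≤ p) (hq : 1 ≤ q) (hr : 1 ≤ r)
    (hpqr : p⁻¹ + q⁻¹ = r⁻¹) :
    ∃ C : ℝ, 0 < C ∧ ∀ Θ : Zd d → Zd d → Zd d → ℂ, tensorNorm ω N Θ ≠ ∞ →
      ∀ f g : Zd d → ℂ,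
        wlpNorm r (s₁ + s₂) (Tbil Θ f g) ≤
          ENNReal.ofReal C * tensorNorm ω N Θ *
            wlpNorm p (s₁ + ω) f * wlpNorm q (s₂ + ω) g := by
  classical
  -- split the decay exponent
  set ωp : ℝ := max ω 0 with hωp
  set τ : ℝ := N - (ωp + (|s₁ + ω| + |s₂ + ω|) / 2) with hτdef
  have hτd : (d : ℝ) < τ := by
    rw [hτdef]; linarith [hN]
  have hτ0 : 0 < τ := lt_of_le_of_lt (by positivity) hτd
  have h2N : 2 * N = |s₁ + ω| + |s₂ + ω| + 2 * max ω 0 + 2 * τ := by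
    rw [hτdef, hωp]; ring
  obtain ⟨C₀, hC₀, hker⟩ := Aux.kernel (d := d) s₁ s₂ ω N τ hτ0.le h2N
  -- the convolution weight
  set H : Zd d → ℝ≥0∞ := fun v => ENNReal.ofReal (jb (znorm v) ^ (-τ)) with hHdef
  have hH0 : ∀ v, H v ≠ 0 := fun v => by
    simp only [hHdef, ne_eq, ENNReal.ofReal_eq_zero, not_le]
    exact Real.rpow_pos_of_pos (Aux.jb_pos _) _
  have hHt : ∀ v, H v ≠ ⊤ := fun v => ENNReal.ofReal_ne_top
  set S : ℝ≥0∞ := ∑' v, H v with hSdef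
  have hSt : S ≠ ⊤ := Aux.S_ne_top hd hτd
  have hS1 : 1 ≤ S := Aux.one_le_S τ
  have hStR : 1 ≤ S.toReal := by
    have := ENNReal.toReal_mono hSt hS1
    simpa using this
  refine ⟨C₀ * S.toReal ^ 2, by positivity, ?_⟩
  intro Θ hΘ f g
  set M := tensorNorm ω N Θ with hMdef
  have hCeq : ENNReal.ofReal (C₀ * S.toReal ^ 2) = ENNReal.ofReal C₀ * S * S := by
    rw [sq, ENNReal.ofReal_mul hC₀.le, ENNReal.ofReal_mul (by positivity),
      ENNReal.ofReal_toReal hSt, mul_assoc]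
  -- pointwise bound on the tensor
  have hΘbd : ∀ j k l : Zd d, ENNReal.ofReal ‖Θ j k l‖ ≤ M * ENNReal.ofReal
      (jb (znorm j + znorm k) ^ ω * jb (znorm j + znorm l) ^ ω *
        jb (znorm (j - k) + znorm (j - l)) ^ (-(2 * N))) := by
    intro j k l
    have hD : (0:ℝ) < jb (znorm j + znorm k) ^ ω * jb (znorm j + znorm l) ^ ω :=
      mul_pos (Real.rpow_pos_of_pos (Aux.jb_pos _) _) (Real.rpow_pos_of_pos (Aux.jb_pos _) _)
    have hX : (0:ℝ) < jb (znorm (j - k) + znorm (j - l)) ^ (2 * N) :=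
      Real.rpow_pos_of_pos (Aux.jb_pos _) _
    have h1 : ENNReal.ofReal (‖Θ j k l‖ * jb (znorm (j - k) + znorm (j - l)) ^ (2 * N) /
        (jb (znorm j + znorm k) ^ ω * jb (znorm j + znorm l) ^ ω)) ≤ M := by
      rw [hMdef]
      exact le_iSup_of_le j (le_iSup_of_le k (le_iSup_of_le l le_rfl))
    have e : ‖Θ j k l‖ = (‖Θ j k l‖ * jb (znorm (j - k) + znorm (j - l)) ^ (2 * N) /
        (jb (znorm j + znorm k) ^ ω * jb (znorm j + znorm l) ^ ω)) *
        (jb (znorm j + znorm k) ^ ω * jb (znorm j + znorm l) ^ ω *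
          jb (znorm (j - k) + znorm (j - l)) ^ (-(2 * N))) := by
      rw [Real.rpow_neg (Aux.jb_pos _).le]
      field_simp
      rw [mul_assoc, mul_div_assoc, div_self hD.ne', mul_one]
    calc ENNReal.ofReal ‖Θ j k l‖
        = ENNReal.ofReal (‖Θ j k l‖ * jb (znorm (j - k) + znorm (j - l)) ^ (2 * N) /
            (jb (znorm j + znorm k) ^ ω * jb (znorm j + znorm l) ^ ω)) *
          ENNReal.ofReal (jb (znorm j + znorm k) ^ ω * jb (znorm j + znorm l) ^ ω *
            jb (znorm (j - k) + znorm (j - l)) ^ (-(2 * N))) := by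
          rw [← ENNReal.ofReal_mul (by positivity), ← e]
      _ ≤ M * ENNReal.ofReal (jb (znorm j + znorm k) ^ ω * jb (znorm j + znorm l) ^ ω *
            jb (znorm (j - k) + znorm (j - l)) ^ (-(2 * N))) :=
          mul_le_mul_left h1 _
  -- weighted sequences
  set F : Zd d → ℝ≥0∞ := fun k => ENNReal.ofReal (jb (znorm k) ^ (s₁ + ω) * ‖f k‖) with hFdef
  set G : Zd d → ℝ≥0∞ := fun l => ENNReal.ofReal (jb (znorm l) ^ (s₂ + ω) * ‖g l‖) with hGdef
  -- the pointwise bound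
  have main_pt : ∀ j : Zd d,
      ENNReal.ofReal (jb (znorm j) ^ (s₁ + s₂) * ‖Tbil Θ f g j‖) ≤
      (ENNReal.ofReal C₀ * M) * ((∑' k, H (j - k) * F k) * (∑' l, H (j - l) * G l)) := by
    intro j
    have tw : ∀ k l : Zd d,
        ENNReal.ofReal (jb (znorm j) ^ (s₁ + s₂)) * ENNReal.ofReal ‖Θ j k l * f k * g l‖ ≤
        (ENNReal.ofReal C₀ * M) * ((H (j - k) * F k) * (H (j - l) * G l)) := by
      intro k l
      have hn : ‖Θ j k l * f k * g l‖ = ‖Θ j k l‖ * (‖f k‖ * ‖g l‖) := by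
        rw [norm_mul, norm_mul]; ring
      have ha : (0:ℝ) ≤ jb (znorm j) ^ (s₁ + s₂) :=
        (Real.rpow_pos_of_pos (Aux.jb_pos _) _).le
      have hK : (0:ℝ) ≤ jb (znorm j + znorm k) ^ ω * jb (znorm j + znorm l) ^ ω *
          jb (znorm (j - k) + znorm (j - l)) ^ (-(2 * N)) :=
        mul_nonneg (mul_nonneg (Real.rpow_pos_of_pos (Aux.jb_pos _) _).le
          (Real.rpow_pos_of_pos (Aux.jb_pos _) _).le) (Real.rpow_pos_of_pos (Aux.jb_pos _) _).le
      have hw : (0:ℝ) ≤ ‖f k‖ * ‖g l‖ := mul_nonneg (norm_nonneg _) (norm_nonneg _)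
      have hA : (0:ℝ) ≤ jb (znorm k) ^ (s₁ + ω) * ‖f k‖ :=
        mul_nonneg (Real.rpow_pos_of_pos (Aux.jb_pos _) _).le (norm_nonneg _)
      have hB : (0:ℝ) ≤ jb (znorm l) ^ (s₂ + ω) * ‖g l‖ :=
        mul_nonneg (Real.rpow_pos_of_pos (Aux.jb_pos _) _).le (norm_nonneg _)
      have hx : (0:ℝ) ≤ jb (znorm (j - k)) ^ (-τ) :=
        (Real.rpow_pos_of_pos (Aux.jb_pos _) _).le
      have hy : (0:ℝ) ≤ jb (znorm (j - l)) ^ (-τ) :=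
        (Real.rpow_pos_of_pos (Aux.jb_pos _) _).le
      have e2 : ENNReal.ofReal (jb (znorm j) ^ (s₁ + s₂) *
          (jb (znorm j + znorm k) ^ ω * jb (znorm j + znorm l) ^ ω *
            jb (znorm (j - k) + znorm (j - l)) ^ (-(2 * N))) * (‖f k‖ * ‖g l‖)) =
          ENNReal.ofReal (jb (znorm j) ^ (s₁ + s₂)) *
          ENNReal.ofReal (jb (znorm j + znorm k) ^ ω * jb (znorm j + znorm l) ^ ω *
            jb (znorm (j - k) + znorm (j - l)) ^ (-(2 * N))) *
          ENNReal.ofReal (‖f k‖ * ‖g l‖) := by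
        rw [ENNReal.ofReal_mul (mul_nonneg ha hK), ENNReal.ofReal_mul ha]
      have e3 : ENNReal.ofReal (C₀ * ((jb (znorm k) ^ (s₁ + ω) * ‖f k‖) *
          ((jb (znorm l) ^ (s₂ + ω) * ‖g l‖) *
            (jb (znorm (j - k)) ^ (-τ) * jb (znorm (j - l)) ^ (-τ))))) =
          ENNReal.ofReal C₀ * (F k * (G l * (H (j - k) * H (j - l)))) := by
        rw [ENNReal.ofReal_mul hC₀.le, ENNReal.ofReal_mul hA, ENNReal.ofReal_mul hB,
          ENNReal.ofReal_mul hx]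
      calc ENNReal.ofReal (jb (znorm j) ^ (s₁ + s₂)) * ENNReal.ofReal ‖Θ j k l * f k * g l‖
          = ENNReal.ofReal (jb (znorm j) ^ (s₁ + s₂)) *
              (ENNReal.ofReal ‖Θ j k l‖ * ENNReal.ofReal (‖f k‖ * ‖g l‖)) := by
            rw [hn, ENNReal.ofReal_mul (norm_nonneg _)]
        _ ≤ ENNReal.ofReal (jb (znorm j) ^ (s₁ + s₂)) *
              ((M * ENNReal.ofReal (jb (znorm j + znorm k) ^ ω * jb (znorm j + znorm l) ^ ω *
                jb (znorm (j - k) + znorm (j - l)) ^ (-(2 * N)))) *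
              ENNReal.ofReal (‖f k‖ * ‖g l‖)) :=
            mul_le_mul_right (mul_le_mul_left (hΘbd j k l) _) _
        _ = M * ENNReal.ofReal (jb (znorm j) ^ (s₁ + s₂) *
              (jb (znorm j + znorm k) ^ ω * jb (znorm j + znorm l) ^ ω *
                jb (znorm (j - k) + znorm (j - l)) ^ (-(2 * N))) * (‖f k‖ * ‖g l‖)) := by
            rw [e2]; ring
        _ ≤ M * ENNReal.ofReal (C₀ * ((jb (znorm k) ^ (s₁ + ω) * ‖f k‖) *
              ((jb (znorm l) ^ (s₂ + ω) * ‖g l‖) *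
                (jb (znorm (j - k)) ^ (-τ) * jb (znorm (j - l)) ^ (-τ))))) := by
            apply mul_le_mul_right
            apply ENNReal.ofReal_le_ofReal
            calc jb (znorm j) ^ (s₁ + s₂) *
                (jb (znorm j + znorm k) ^ ω * jb (znorm j + znorm l) ^ ω *
                  jb (znorm (j - k) + znorm (j - l)) ^ (-(2 * N))) * (‖f k‖ * ‖g l‖)
                ≤ (C₀ * (jb (znorm k) ^ (s₁ + ω) * jb (znorm l) ^ (s₂ + ω) *
                    (jb (znorm (j - k)) ^ (-τ) * jb (znorm (j - l)) ^ (-τ)))) *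
                  (‖f k‖ * ‖g l‖) :=
                  mul_le_mul_of_nonneg_right (hker j k l) hw
              _ = C₀ * ((jb (znorm k) ^ (s₁ + ω) * ‖f k‖) *
                  ((jb (znorm l) ^ (s₂ + ω) * ‖g l‖) *
                    (jb (znorm (j - k)) ^ (-τ) * jb (znorm (j - l)) ^ (-τ)))) := by ring
        _ = M * (ENNReal.ofReal C₀ * (F k * (G l * (H (j - k) * H (j - l))))) := by rw [e3]
        _ = (ENNReal.ofReal C₀ * M) * ((H (j - k) * F k) * (H (j - l) * G l)) := by ring
    calc ENNReal.ofReal (jb (znorm j) ^ (s₁ + s₂) * ‖Tbil Θ f g j‖)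
        = ENNReal.ofReal (jb (znorm j) ^ (s₁ + s₂)) *
            ENNReal.ofReal ‖∑' k, ∑' l, Θ j k l * f k * g l‖ := by
          rw [← ENNReal.ofReal_mul ((Real.rpow_pos_of_pos (Aux.jb_pos (znorm j)) (s₁ + s₂)).le)]
          rfl
      _ ≤ ENNReal.ofReal (jb (znorm j) ^ (s₁ + s₂)) *
            ∑' k, ENNReal.ofReal ‖∑' l, Θ j k l * f k * g l‖ :=
          mul_le_mul_right (Aux.ofReal_norm_tsum_le _) _
      _ ≤ ENNReal.ofReal (jb (znorm j) ^ (s₁ + s₂)) *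
            ∑' k, ∑' l, ENNReal.ofReal ‖Θ j k l * f k * g l‖ :=
          mul_le_mul_right
            (ENNReal.tsum_le_tsum fun k => Aux.ofReal_norm_tsum_le _) _
      _ = ∑' k, ∑' l, ENNReal.ofReal (jb (znorm j) ^ (s₁ + s₂)) *
            ENNReal.ofReal ‖Θ j k l * f k * g l‖ := by
          rw [← ENNReal.tsum_mul_left]
          exact tsum_congr fun k => (ENNReal.tsum_mul_left).symm
      _ ≤ ∑' k, ∑' l, (ENNReal.ofReal C₀ * M) * ((H (j - k) * F k) * (H (j - l) * G l)) :=
          ENNReal.tsum_le_tsum fun k => ENNReal.tsum_le_tsum fun l => tw k l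
      _ = (ENNReal.ofReal C₀ * M) * ((∑' k, H (j - k) * F k) * (∑' l, H (j - l) * G l)) := by
          calc ∑' k, ∑' l, (ENNReal.ofReal C₀ * M) * ((H (j - k) * F k) * (H (j - l) * G l))
              = ∑' k, ((ENNReal.ofReal C₀ * M) * (H (j - k) * F k)) *
                  (∑' l, H (j - l) * G l) := by
                refine tsum_congr fun k => ?_
                rw [← ENNReal.tsum_mul_left]
                exact tsum_congr fun l => by ring
            _ = (∑' k, (ENNReal.ofReal C₀ * M) * (H (j - k) * F k)) *
                (∑' l, H (j - l) * G l) := ENNReal.tsum_mul_right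
            _ = (ENNReal.ofReal C₀ * M) * ((∑' k, H (j - k) * F k) *
                (∑' l, H (j - l) * G l)) := by
                rw [ENNReal.tsum_mul_left]; ring
  -- put everything together
  have young1 := Aux.young hp H F hH0 hHt
  have young2 := Aux.young hq H G hH0 hHt
  calc wlpNorm r (s₁ + s₂) (Tbil Θ f g)
      ≤ nestNorm r (fun j => (ENNReal.ofReal C₀ * M) *
          ((∑' k, H (j - k) * F k) * (∑' l, H (j - l) * G l))) :=
        Aux.nestNorm_mono r main_pt
    _ = (ENNReal.ofReal C₀ * M) * nestNorm r (fun j =>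
          (∑' k, H (j - k) * F k) * (∑' l, H (j - l) * G l)) :=
        Aux.nestNorm_const_mul hr _ _
    _ ≤ (ENNReal.ofReal C₀ * M) * (nestNorm p (fun j => ∑' k, H (j - k) * F k) *
          nestNorm q (fun j => ∑' l, H (j - l) * G l)) :=
        mul_le_mul_right (Aux.nestNorm_holder hp hq hpqr _ _) _
    _ ≤ (ENNReal.ofReal C₀ * M) * ((S * nestNorm p F) * (S * nestNorm q G)) :=
        mul_le_mul_right (mul_le_mul' young1 young2) _
    _ = ENNReal.ofReal (C₀ * S.toReal ^ 2) * M * nestNorm p F * nestNorm q G := by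
        rw [hCeq]; ring
    _ = ENNReal.ofReal (C₀ * S.toReal ^ 2) * tensorNorm ω N Θ *
          wlpNorm p (s₁ + ω) f * wlpNorm q (s₂ + ω) g := rfl

end
end
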